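/- If a lens satisfies the Undoability law (∀ s ∈ S, ∀ v ∈ V, Put(Put(s, v), Get(s)) = s), then it satisfies the WeakPutGet law (∀ s ∈ S, ∀ v ∈ V, Put(s, Get(Put(s, v))) = Put(s, v)). -/
import Mathlib

/-- Undoability implies WeakPutGet. -/
theorem undoability_implies_weakPutGet {S V : Type*} (Get : S → V) (Put : S → V → S)
    (hUD : ∀ s : S, ∀ v : V, Put (Put s v) (Get s) = s) :
    ∀ s : S, ∀ v : V, Put s (Get (Put s v)) = Put s v := by
  intro s v
  have h := hUD (Put s v) (Get s)
  rw [hUD s v] at h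
  exact h
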